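/- Let G ∈ F^{k×n} and A_1,...,A_ℓ ⊆ [n]. For any B ⊆ \bar A_1 ∪ ... ∪ \bar A_ℓ (where \bar A_i = [n]∖A_i), we have rank ℋ_{A_1,...,A_ℓ}[G] ≥ |B| + rank ℋ_{A_1∖B,...,A_ℓ∖B}[G|_{\bar B}], where the second matrix is formed from the matrix G with the columns in B deleted and the sets A_i ∖ B viewed inside [n]∖B. -/

import Mathlib

open Matrix

section Aux

variable {F : Type} [Field F]

/-- Submodule prod equiv. -/
def subProdEquiv {R M N : Type*} [Ring R] [AddCommGroup M] [AddCommGroup N]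
    [Module R M] [Module R N] (p : Submodule R M) (q : Submodule R N) :
    (p.prod q) ≃ₗ[R] p × q where
  toFun x := (⟨x.1.1, x.2.1⟩, ⟨x.1.2, x.2.2⟩)
  invFun x := ⟨(x.1.1, x.2.1), ⟨x.1.2, x.2.2⟩⟩
  map_add' x y := rfl
  map_smul' c x := rfl
  left_inv x := rfl
  right_inv x := rfl

lemma rank_submatrix_le'' {m m' n n' : Type} [Fintype m] [Fintype m'] [Fintype n] [Fintype n']
    [DecidableEq m] [DecidableEq m']
    (M : Matrix m m' F) (f : n → m) (g : n' → m') :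
    (M.submatrix f g).rank ≤ M.rank := by
  have h : M.submatrix f g =
      (Matrix.of fun i i' => if f i = i' then (1:F) else 0) * M *
        (Matrix.of fun j' j => if g j = j' then (1:F) else 0) := by
    ext i j
    simp [Matrix.mul_apply, ite_mul, mul_ite, Finset.sum_ite_eq, Finset.sum_ite_eq']
  rw [h]
  exact le_trans (rank_mul_le_left _ _) (rank_mul_le_right _ _)

lemma rank_fromBlocks_diag {m₁ m₂ n₁ n₂ : Type} [Fintype m₁] [Fintype m₂] [Fintype n₁]
    [Fintype n₂] (A : Matrix m₁ n₁ F) (D : Matrix m₂ n₂ F) :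
    (fromBlocks A 0 0 D).rank = A.rank + D.rank := by
  classical
  set f := A.mulVecLin
  set g := D.mulVecLin
  have key : (fromBlocks A 0 0 D).mulVecLin =
      ((LinearEquiv.sumArrowLequivProdArrow m₁ m₂ F F).symm.toLinearMap) ∘ₗ
        (f.prodMap g) ∘ₗ (LinearEquiv.sumArrowLequivProdArrow n₁ n₂ F F).toLinearMap := by
    apply LinearMap.ext; intro v
    funext i
    cases i <;>
      simp [f, g, Matrix.mulVecLin_apply, Matrix.fromBlocks_mulVec,
        LinearEquiv.sumArrowLequivProdArrow, Equiv.sumArrowEquivProdArrow]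
  have hrange : LinearMap.range (f.prodMap g) =
      (LinearMap.range f).prod (LinearMap.range g) := by
    ext ⟨x, y⟩
    simp only [LinearMap.mem_range, Submodule.mem_prod, LinearMap.prodMap_apply, Prod.ext_iff]
    constructor
    · rintro ⟨⟨a, b⟩, h1, h2⟩; exact ⟨⟨a, h1⟩, ⟨b, h2⟩⟩
    · rintro ⟨⟨a, h1⟩, ⟨b, h2⟩⟩; exact ⟨(a, b), h1, h2⟩
  rw [Matrix.rank, key, LinearMap.range_comp, LinearMap.range_comp_of_range_eq_top _
      (LinearEquiv.range _), LinearEquiv.finrank_map_eq, hrange]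
  rw [Matrix.rank, Matrix.rank]
  rw [(subProdEquiv (LinearMap.range f) (LinearMap.range g)).finrank_eq]
  exact Module.finrank_prod

end Aux

/-- The block matrix `ℋ_{A_1,…,A_ℓ}[G]` over an arbitrary finite column index type. -/
def Hmat {F : Type} [Field F] {k ℓ : ℕ} {ι : Type} [Fintype ι] [DecidableEq ι]
    (G : Matrix (Fin k) ι F) (A : Fin ℓ → Finset ι) :
    Matrix (ι ⊕ (Fin ℓ × Fin k)) (Σ i : Fin ℓ, {x // x ∈ (A i)ᶜ}) F :=
  Matrix.of fun r c =>
    match r with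
    | Sum.inl r => if r = c.2.1 then (1 : F) else 0
    | Sum.inr p => if p.1 = c.1 then G p.2 c.2.1 else 0

/-- For any `B ⊆ \bar A_1 ∪ … ∪ \bar A_ℓ`,
`rank ℋ_{A_1,…,A_ℓ}[G] ≥ |B| + rank ℋ_{A_1∖B,…,A_ℓ∖B}[G|_{\bar B}]`, where the second
matrix is formed from `G` with the columns in `B` deleted and the `A_i ∖ B` viewed in `[n]∖B`. -/
theorem Hmat_rank_puncture {F : Type} [Field F] {k n ℓ : ℕ}
    (G : Matrix (Fin k) (Fin n) F) (A : Fin ℓ → Finset (Fin n))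
    (B : Finset (Fin n)) (hB : B ⊆ Finset.univ.biUnion fun i => (A i)ᶜ) :
    B.card + (Hmat (G.submatrix id (fun x : {x // x ∈ Bᶜ} => x.1))
        (fun i => Finset.univ.filter fun x : {x // x ∈ Bᶜ} => x.1 ∈ A i)).rank
      ≤ (Hmat G A).rank := by
  classical
  set ι' := {x : Fin n // x ∈ Bᶜ}
  set A' : Fin ℓ → Finset ι' := fun i => Finset.univ.filter fun x : ι' => x.1 ∈ A i with hA'
  set H' := Hmat (G.submatrix id (fun x : ι' => x.1)) A' with hH'
  -- pick for each b ∈ B an index i with b ∈ (A i)ᶜ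
  have hpick : ∀ b : {x // x ∈ B}, ∃ i : Fin ℓ, b.1 ∈ (A i)ᶜ := by
    intro b
    obtain ⟨i, -, hi⟩ := Finset.mem_biUnion.mp (hB b.2)
    exact ⟨i, hi⟩
  choose pick hpickmem using hpick
  -- row and column selection maps
  set f : ({x // x ∈ B} ⊕ (ι' ⊕ Fin ℓ × Fin k)) → (Fin n ⊕ Fin ℓ × Fin k) :=
    Sum.elim (fun b => Sum.inl b.1) (Sum.elim (fun x => Sum.inl x.1) Sum.inr) with hf
  have colmem : ∀ c : (Σ i : Fin ℓ, {x : ι' // x ∈ (A' i)ᶜ}), c.2.1.1 ∈ (A c.1)ᶜ := by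
    intro c
    have := c.2.2
    simp only [hA', Finset.mem_compl, Finset.mem_filter, Finset.mem_univ, true_and] at this
    simpa using this
  set g : ({x // x ∈ B} ⊕ (Σ i : Fin ℓ, {x : ι' // x ∈ (A' i)ᶜ})) →
      (Σ i : Fin ℓ, {x : Fin n // x ∈ (A i)ᶜ}) :=
    Sum.elim (fun b => ⟨pick b, ⟨b.1, hpickmem b⟩⟩) (fun c => ⟨c.1, ⟨c.2.1.1, colmem c⟩⟩) with hg
  set M := (Hmat G A).submatrix f g with hM
  set C : Matrix (ι' ⊕ Fin ℓ × Fin k) {x // x ∈ B} F :=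
    Matrix.of fun r b => M (Sum.inr r) (Sum.inl b) with hC
  have hblock : M = fromBlocks (1 : Matrix {x // x ∈ B} {x // x ∈ B} F) 0 C H' := by
    ext r c
    cases r with
    | inl b =>
      cases c with
      | inl b' =>
        simp only [hM, Matrix.submatrix_apply, hf, hg, Sum.elim_inl, fromBlocks_apply₁₁]
        show (if b.1 = b'.1 then (1:F) else 0) = _
        rw [Matrix.one_apply]
        congr 1
        exact propext Subtype.coe_inj
      | inr c =>
        simp only [hM, Matrix.submatrix_apply, hf, hg, Sum.elim_inl, Sum.elim_inr,
          fromBlocks_apply₁₂, Matrix.zero_apply]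
        show (if b.1 = c.2.1.1 then (1:F) else 0) = 0
        have hb : b.1 ∈ B := b.2
        have hc : c.2.1.1 ∉ B := Finset.mem_compl.mp c.2.1.2
        rw [if_neg]
        intro h; exact hc (h ▸ hb)
    | inr r =>
      cases c with
      | inl b' => rfl
      | inr c =>
        cases r with
        | inl x =>
          simp only [hM, Matrix.submatrix_apply, hf, hg, Sum.elim_inr, Sum.elim_inl,
            fromBlocks_apply₂₂]
          show (if x.1 = c.2.1.1 then (1:F) else 0) = H' (Sum.inl x) c
          show _ = (if x = c.2.1 then (1:F) else 0)
          congr 1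
          exact propext Subtype.coe_inj
        | inr p => rfl
  have hrankM : M.rank ≤ (Hmat G A).rank := rank_submatrix_le'' _ f g
  have hM2 : M.rank = B.card + H'.rank := by
    rw [hblock]
    have hmul : fromBlocks (1 : Matrix {x // x ∈ B} {x // x ∈ B} F) 0 C H' =
        (fromBlocks (1 : Matrix {x // x ∈ B} {x // x ∈ B} F) 0 C
            (1 : Matrix (ι' ⊕ Fin ℓ × Fin k) (ι' ⊕ Fin ℓ × Fin k) F) :
            Matrix ({x // x ∈ B} ⊕ (ι' ⊕ Fin ℓ × Fin k)) ({x // x ∈ B} ⊕ (ι' ⊕ Fin ℓ × Fin k)) F) *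
          (fromBlocks (1 : Matrix {x // x ∈ B} {x // x ∈ B} F) 0 0 H') := by
      rw [fromBlocks_multiply]; simp
    have hdet : IsUnit (fromBlocks (1 : Matrix {x // x ∈ B} {x // x ∈ B} F) 0 C 1).det := by
      rw [Matrix.det_fromBlocks_zero₁₂]; simp
    rw [hmul, rank_mul_eq_right_of_isUnit_det _ _ hdet, rank_fromBlocks_diag,
      Matrix.rank_one, Fintype.card_coe]
  rw [← hM2]
  exact hrankM
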